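/- Let f : U → (−∞, +∞] be proper closed convex, F : X → U, G : X → V linear maps between finite-dimensional real inner product spaces, g(v) = (1/2)⟨v, Σ_g v⟩ − ⟨b, v⟩ convex quadratic, σ > 0, c ∈ X, x̄ ∈ X, ū ∈ dom f, v̄ ∈ V. Let E_g ⪰ σ⁻¹Σ_g + G G* be positive definite, T_g := E_g − σ⁻¹Σ_g − G G*, T_f ⪰ 0 with F F* + σ⁻¹Σ_f + T_f positive definite, T̂_f := T_f + F G* E_g⁻¹ G F*. Define the augmented Lagrangian L_σ(u, v; x) = f(u) + g(v) + ⟨x, F* u + G* v − c⟩ + (σ/2)‖F* u + G* v − c‖². Let δ̄ := F G* E_g⁻¹ (b − G x̄ − Σ_g v̄ + σ G(c − F* ū − G* v̄)) and ᾱ := σ⁻¹ b + T_g v̄ + G(c − σ⁻¹ x̄). Then the joint minimizer (u⁺, v⁺) of (u,v) ↦ L_σ(u,v; x̄) + (σ/2)‖u − ū‖²_{T̂_f} + (σ/2)‖v − v̄‖²_{T_g} satisfies: u⁺ = argmin_u { L_σ(u, v̄; x̄) + ⟨δ̄, u⟩ + (σ/2)‖u − ū‖²_{T_f} } and v⁺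 = E_g⁻¹(ᾱ − G F* u⁺). -/

import Mathlib

open ContinuousLinearMap RealInnerProductSpace

noncomputable section

/-- `T` is positive semidefinite: self-adjoint and `⟪x, T x⟫ ≥ 0` for all `x`. -/
def IsPSD {W : Type*} [NormedAddCommGroup W] [InnerProductSpace ℝ W]
    (T : W →L[ℝ] W) : Prop :=
  (∀ x y, ⟪T x, y⟫ = ⟪x, T y⟫) ∧ ∀ x, 0 ≤ ⟪x, T x⟫

/-- `T` is positive definite: self-adjoint and `⟪x, T x⟫ > 0` for all `x ≠ 0`. -/
def IsPD {W : Type*} [NormedAddCommGroup W] [InnerProductSpace ℝ W]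
    (T : W →L[ℝ] W) : Prop :=
  (∀ x y, ⟪T x, y⟫ = ⟪x, T y⟫) ∧ ∀ x, x ≠ 0 → 0 < ⟪x, T x⟫

private lemma quad_sq' {V : Type*} [NormedAddCommGroup V] [InnerProductSpace ℝ V]
    (A : V →L[ℝ] V) (hA : ∀ x y, ⟪A x, y⟫ = ⟪x, A y⟫) (v vs : V) :
    (1/2)*⟪v, A v⟫ - ⟪A vs, v⟫ =
      ((1/2)*⟪vs, A vs⟫ - ⟪A vs, vs⟫) + (1/2)*⟪v - vs, A (v - vs)⟫ := by
  simp only [inner_sub_left, inner_sub_right, map_sub]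
  have h1 := hA vs v
  have h2 := real_inner_comm vs (A v)
  have h3 := real_inner_comm v (A vs)
  have h4 := real_inner_comm vs (A vs)
  linarith

private lemma sq_expand' {X V : Type*}
    [NormedAddCommGroup X] [InnerProductSpace ℝ X] [FiniteDimensional ℝ X]
    [NormedAddCommGroup V] [InnerProductSpace ℝ V] [FiniteDimensional ℝ V]
    (G : X →L[ℝ] V) (Sg Tg : V →L[ℝ] V)
    (hTg : ∀ x y, ⟪Tg x, y⟫ = ⟪x, Tg y⟫)
    (σ : ℝ) (hσ : σ ≠ 0) (b : V) (xbar c : X) (vbar : V) (a : X) (v : V) :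
    ((1/2)*⟪v, Sg v⟫ - ⟪b, v⟫) + ⟪xbar, a + (adjoint G) v - c⟫
      + (σ/2)*‖a + (adjoint G) v - c‖^2
      + (σ/2)*⟪v - vbar, Tg (v - vbar)⟫
    = (1/2)*⟪v, (σ • (Tg + σ⁻¹ • Sg + G.comp (adjoint G))) v⟫
      - ⟪σ • ((σ⁻¹ • b + Tg vbar + G (c - σ⁻¹ • xbar)) - G a), v⟫
      + (⟪xbar, a - c⟫ + (σ/2)*‖a - c‖^2 + (σ/2)*⟪vbar, Tg vbar⟫) := by
  have e1 : a + (adjoint G) v - c = (a - c) + (adjoint G) v := by abel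
  rw [e1, ← real_inner_self_eq_norm_sq, ← real_inner_self_eq_norm_sq]
  simp only [inner_add_left, inner_add_right, inner_sub_left, inner_sub_right,
    real_inner_smul_left, real_inner_smul_right, map_add, map_sub, map_smul,
    add_apply, smul_apply, comp_apply, adjoint_inner_left, adjoint_inner_right]
  have hs : σ * σ⁻¹ = 1 := mul_inv_cancel₀ hσ
  linear_combination (-(1/2) * ⟪v, Sg v⟫ + ⟪b, v⟫ - ⟪G xbar, v⟫) * hs
    + (σ/2) * real_inner_comm (G a) v - (σ/2) * real_inner_comm (G c) v
    - (σ/2) * real_inner_comm (G ((adjoint G) v)) v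
    + (σ/2) * hTg vbar v - (σ/2) * real_inner_comm (Tg vbar) v

private lemma cross_expand' {V : Type*} [NormedAddCommGroup V] [InnerProductSpace ℝ V]
    (B : V →L[ℝ] V) (hB : ∀ x y, ⟪B x, y⟫ = ⟪x, B y⟫) (σ : ℝ) (q qb βv d : V)
    (h : σ • (qb + βv) = -d) :
    (σ/2)*⟪q - qb, B (q - qb)⟫ - (σ/2)*⟪B (q + βv), q + βv⟫
      + (σ/2)*⟪B (qb + βv), qb + βv⟫ = ⟪B d, q - qb⟫ := by
  have hd : d = -(σ • (qb + βv)) := by rw [h, neg_neg]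
  subst hd
  simp only [inner_sub_left, inner_sub_right, inner_add_left, inner_add_right,
    real_inner_smul_left, real_inner_smul_right, map_add, map_sub, map_smul, map_neg,
    inner_neg_left, inner_neg_right]
  linear_combination (-σ/2)*hB q q + (σ/2)*hB qb q - (σ/2)*real_inner_comm (B qb) q
    + (-σ/2)*hB qb qb - (σ/2)*hB q βv - (σ/2)*real_inner_comm (B βv) q
    + (σ/2)*hB qb βv + (σ/2)*real_inner_comm (B βv) qb

set_option maxHeartbeats 1600000 in
theorem scb_joint_prox_characterization
    {X U V : Type*}
    [NormedAddCommGroup X] [InnerProductSpace ℝ X] [FiniteDimensional ℝ X]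
    [NormedAddCommGroup U] [InnerProductSpace ℝ U] [FiniteDimensional ℝ U]
    [NormedAddCommGroup V] [InnerProductSpace ℝ V] [FiniteDimensional ℝ V]
    (f : U → EReal)
    (hproper : (∃ u, f u ≠ ⊤) ∧ ∀ u, f u ≠ ⊥)
    (hclosed : LowerSemicontinuous f)
    (hconvex : ∀ (u u' : U) (t : ℝ), 0 ≤ t → t ≤ 1 →
      f (t • u + (1 - t) • u') ≤ ((t : ℝ) : EReal) * f u + (((1 - t : ℝ)) : EReal) * f u')
    (F : X →L[ℝ] U) (G : X →L[ℝ] V)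
    (Sf : U →L[ℝ] U) (Sg : V →L[ℝ] V) (hSf : IsPSD Sf) (hSg : IsPSD Sg)
    (b : V) (σ : ℝ) (hσ : 0 < σ) (c xbar : X)
    (ubar : U) (hubar : f ubar ≠ ⊤) (vbar : V)
    (Eg Eginv : V →L[ℝ] V) (hEg : IsPD Eg)
    (hmaj : IsPSD (Eg - (σ⁻¹ • Sg + G.comp (adjoint G))))
    (hinv1 : Eg.comp Eginv = 1) (hinv2 : Eginv.comp Eg = 1)
    (Tf : U →L[ℝ] U) (hTf : IsPSD Tf)
    (hpd : IsPD (F.comp (adjoint F) + σ⁻¹ • Sf + Tf))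
    (up : U) (vp : V) :
    let Tg : V →L[ℝ] V := Eg - σ⁻¹ • Sg - G.comp (adjoint G)
    let Tfhat : U →L[ℝ] U :=
      Tf + F.comp ((adjoint G).comp (Eginv.comp (G.comp (adjoint F))))
    let g : V → ℝ := fun v => (1/2) * ⟪v, Sg v⟫ - ⟪b, v⟫
    let L : U → V → ℝ := fun u v =>
      g v + ⟪xbar, (adjoint F) u + (adjoint G) v - c⟫
        + (σ/2) * ‖(adjoint F) u + (adjoint G) v - c‖ ^ 2
    let δ : U := F ((adjoint G) (Eginv
      (b - G xbar - Sg vbar + σ • (G (c - (adjoint F) ubar - (adjoint G) vbar)))))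
    let α : V := σ⁻¹ • b + Tg vbar + G (c - σ⁻¹ • xbar)
    -- `(up, vp)` jointly minimizes the proximal augmented Lagrangian
    (∀ (u : U) (v : V),
        f up + ((L up vp + (σ/2) * ⟪up - ubar, Tfhat (up - ubar)⟫
            + (σ/2) * ⟪vp - vbar, Tg (vp - vbar)⟫ : ℝ) : EReal)
          ≤ f u + ((L u v + (σ/2) * ⟪u - ubar, Tfhat (u - ubar)⟫
            + (σ/2) * ⟪v - vbar, Tg (v - vbar)⟫ : ℝ) : EReal)) →
    -- then `up` minimizes the `u`-subproblem with the extra linear term `⟨δ, ·⟩`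
    ((∀ u : U,
        f up + ((L up vbar + ⟪δ, up⟫
            + (σ/2) * ⟪up - ubar, Tf (up - ubar)⟫ : ℝ) : EReal)
          ≤ f u + ((L u vbar + ⟪δ, u⟫
            + (σ/2) * ⟪u - ubar, Tf (u - ubar)⟫ : ℝ) : EReal)) ∧
      vp = Eginv (α - G ((adjoint F) up))) := by
  intro Tg Tfhat g L δ α hjoint
  have hσ0 : σ ≠ 0 := ne_of_gt hσ
  have hTgdef : Tg = Eg - σ⁻¹ • Sg - G.comp (adjoint G) := rfl
  have hTfhatdef : Tfhat = Tf + F.comp ((adjoint G).comp (Eginv.comp (G.comp (adjoint F)))) := rfl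
  have hLdef : L = fun u v =>
      g v + ⟪xbar, (adjoint F) u + (adjoint G) v - c⟫
        + (σ/2) * ‖(adjoint F) u + (adjoint G) v - c‖ ^ 2 := rfl
  have hgdef : g = fun v => (1/2) * ⟪v, Sg v⟫ - ⟪b, v⟫ := rfl
  have hαdef : α = σ⁻¹ • b + Tg vbar + G (c - σ⁻¹ • xbar) := rfl
  set d : V := b - G xbar - Sg vbar + σ • (G (c - (adjoint F) ubar - (adjoint G) vbar)) with hd
  have hδdef : δ = F ((adjoint G) (Eginv d)) := rfl
  set w : U → V := fun u => Eginv (α - G ((adjoint F) u)) with hw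
  -- basic operator facts
  have hEgEginv : ∀ y, Eg (Eginv y) = y := by
    intro y; rw [← comp_apply, hinv1, ContinuousLinearMap.one_apply]
  have hEginvEg : ∀ y, Eginv (Eg y) = y := by
    intro y; rw [← comp_apply, hinv2, ContinuousLinearMap.one_apply]
  have hEginvsym : ∀ x y, ⟪Eginv x, y⟫ = ⟪x, Eginv y⟫ := by
    intro x y
    calc ⟪Eginv x, y⟫ = ⟪Eginv x, Eg (Eginv y)⟫ := by rw [hEgEginv]
      _ = ⟪Eg (Eginv x), Eginv y⟫ := (hEg.1 _ _).symm
      _ = ⟪x, Eginv y⟫ := by rw [hEgEginv]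
  have hGGsym : ∀ x y : V, ⟪G ((adjoint G) x), y⟫ = ⟪x, G ((adjoint G) y)⟫ := by
    intro x y
    rw [← adjoint_inner_right, adjoint_inner_left]
  have hTgsym : ∀ x y, ⟪Tg x, y⟫ = ⟪x, Tg y⟫ := by
    intro x y
    rw [hTgdef]
    simp only [sub_apply, smul_apply, comp_apply, inner_sub_left, inner_sub_right,
      real_inner_smul_left, real_inner_smul_right]
    rw [hEg.1 x y, hSg.1 x y, hGGsym x y]
  have hEgpsd : ∀ z : V, 0 ≤ ⟪z, Eg z⟫ := by
    intro z
    rcases eq_or_ne z 0 with h | h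
    · simp [h]
    · exact le_of_lt (hEg.2 z h)
  have hwu : ∀ u : U, Eg (w u) = α - G ((adjoint F) u) := by
    intro u; simp only [hw]; exact hEgEginv _
  -- the one-variable quadratic expansion in v
  have hE1 : ∀ (u : U) (v : V),
      L u v + (σ/2) * ⟪u - ubar, Tfhat (u - ubar)⟫ + (σ/2) * ⟪v - vbar, Tg (v - vbar)⟫
        = (L u (w u) + (σ/2) * ⟪u - ubar, Tfhat (u - ubar)⟫
            + (σ/2) * ⟪w u - vbar, Tg (w u - vbar)⟫)
          + (σ/2) * ⟪v - w u, Eg (v - w u)⟫ := by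
    intro u v
    have hop : Tg + σ⁻¹ • Sg + G.comp (adjoint G) = Eg := by rw [hTgdef]; abel
    have key : ∀ vv : V,
        ((1/2)*⟪vv, Sg vv⟫ - ⟪b, vv⟫) + ⟪xbar, (adjoint F) u + (adjoint G) vv - c⟫
          + (σ/2)*‖(adjoint F) u + (adjoint G) vv - c‖^2
          + (σ/2)*⟪vv - vbar, Tg (vv - vbar)⟫
        = (1/2)*⟪vv, (σ • Eg) vv⟫ - ⟪σ • (α - G ((adjoint F) u)), vv⟫
          + (⟪xbar, (adjoint F) u - c⟫ + (σ/2)*‖(adjoint F) u - c‖^2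
             + (σ/2)*⟪vbar, Tg vbar⟫) := by
      intro vv
      have h0 := sq_expand' G Sg Tg hTgsym σ hσ0 b xbar c vbar ((adjoint F) u) vv
      rw [hop, ← hαdef] at h0
      exact h0
    have hAsym : ∀ x y : V, ⟪(σ • Eg) x, y⟫ = ⟪x, (σ • Eg) y⟫ := by
      intro x y
      simp only [ContinuousLinearMap.smul_apply, real_inner_smul_left, real_inner_smul_right]
      rw [hEg.1 x y]
    have hq := quad_sq' (σ • Eg) hAsym v (w u)
    have hAw : (σ • Eg) (w u) = σ • (α - G ((adjoint F) u)) := by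
      rw [ContinuousLinearMap.smul_apply, hwu u]
    rw [hAw] at hq
    have hb2 : (⟪w u, (σ • Eg) (w u)⟫ : ℝ) = ⟪w u, σ • (α - G ((adjoint F) u))⟫ := by
      rw [hAw]
    have hsm : ∀ z : V, (1/2) * ⟪z, (σ • Eg) z⟫ = (σ/2) * ⟪z, Eg z⟫ := by
      intro z; rw [ContinuousLinearMap.smul_apply, real_inner_smul_right]; ring
    have k1 := key v
    have k2 := key (w u)
    have s1 := hsm (v - w u)
    simp only [hLdef, hgdef]
    linarith [k1, k2, hq, s1, hb2]
  -- splitting of the Tfhat quadratic form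
  have hTfhat_split : ∀ z : U, ⟪z, Tfhat z⟫
      = ⟪z, Tf z⟫ + ⟪G ((adjoint F) z), Eginv (G ((adjoint F) z))⟫ := by
    intro z
    rw [hTfhatdef]
    simp only [add_apply, comp_apply, inner_add_right]
    have : ⟪z, F ((adjoint G) (Eginv (G ((adjoint F) z))))⟫
        = ⟪G ((adjoint F) z), Eginv (G ((adjoint F) z))⟫ := by
      rw [← adjoint_inner_left, adjoint_inner_right]
    rw [this]
  have hdelta : ∀ z : U, ⟪δ, z⟫ = ⟪Eginv d, G ((adjoint F) z)⟫ := by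
    intro z
    rw [hδdef, ← adjoint_inner_right, adjoint_inner_left]
  set βv : V := Eg vbar - α with hβv
  have hterm : ∀ u : U, ⟪vbar - w u, Eg (vbar - w u)⟫
      = ⟪Eginv (G ((adjoint F) u) + βv), G ((adjoint F) u) + βv⟫ := by
    intro u
    have h1 : Eg (vbar - w u) = G ((adjoint F) u) + βv := by
      rw [map_sub, hwu u, hβv]; abel
    have h2 : vbar - w u = Eginv (G ((adjoint F) u) + βv) := by
      rw [← h1, hEginvEg]
    rw [h1, h2]
  have hkey : σ • (G ((adjoint F) ubar) + βv) = -d := by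
    rw [hβv, hαdef, hTgdef, hd]
    simp only [map_sub, map_add, map_smul, sub_apply, smul_apply, comp_apply,
      smul_sub, smul_add, neg_add, neg_sub]
    match_scalars <;> field_simp <;> ring
  -- f up is finite
  have hup_top : f up ≠ ⊤ := by
    intro h
    have h2 := hjoint ubar vbar
    obtain ⟨r, hr⟩ : ∃ r : ℝ, f ubar = (r : EReal) := by
      lift f ubar to ℝ using ⟨hubar, hproper.2 ubar⟩ with r
      exact ⟨r, rfl⟩
    rw [h, hr, ← EReal.coe_add, EReal.top_add_coe] at h2
    exact EReal.coe_ne_top _ (top_le_iff.1 h2)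
  obtain ⟨p, hp⟩ : ∃ p : ℝ, f up = (p : EReal) := by
    lift f up to ℝ using ⟨hup_top, hproper.2 up⟩ with p
    exact ⟨p, rfl⟩
  -- conclusion (b): vp = w up
  have hb : vp = w up := by
    have h2 := hjoint up (w up)
    rw [hp, ← EReal.coe_add, ← EReal.coe_add, EReal.coe_le_coe_iff] at h2
    have h3 := hE1 up vp
    have h4 : ⟪vp - w up, Eg (vp - w up)⟫ ≤ 0 := by nlinarith [h2, h3, hσ]
    by_contra hne
    exact absurd h4 (not_le.mpr (hEg.2 _ (sub_ne_zero.mpr hne)))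
  constructor
  · -- conclusion (a): the u-subproblem
    -- the E2 identity: difference is constant in u
    have hE2 : ∀ u : U,
        (L u (w u) + (σ/2) * ⟪u - ubar, Tfhat (u - ubar)⟫
          + (σ/2) * ⟪w u - vbar, Tg (w u - vbar)⟫)
        - (L u vbar + ⟪δ, u⟫ + (σ/2) * ⟪u - ubar, Tf (u - ubar)⟫)
        = (L ubar (w ubar) + (σ/2) * ⟪w ubar - vbar, Tg (w ubar - vbar)⟫)
          - (L ubar vbar + ⟪δ, ubar⟫) := by
      intro u
      have e1 := hE1 u vbar
      have e2 := hE1 ubar vbar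
      have z1 : (⟪vbar - vbar, Tg (vbar - vbar)⟫ : ℝ) = 0 := by simp
      have z2 : (⟪ubar - ubar, Tfhat (ubar - ubar)⟫ : ℝ) = 0 := by simp
      have t1 := hTfhat_split (u - ubar)
      have t2 := hterm u
      have t3 := hterm ubar
      have d1 := hdelta u
      have d2 := hdelta ubar
      have hGF : G ((adjoint F) (u - ubar)) = G ((adjoint F) u) - G ((adjoint F) ubar) := by
        simp [map_sub]
      have e5 : ⟪G ((adjoint F) (u - ubar)), Eginv (G ((adjoint F) (u - ubar)))⟫
          = ⟪G ((adjoint F) u) - G ((adjoint F) ubar),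
              Eginv (G ((adjoint F) u) - G ((adjoint F) ubar))⟫ := by rw [hGF]
      have e6 : ⟪Eginv d, G ((adjoint F) u) - G ((adjoint F) ubar)⟫
          = ⟪Eginv d, G ((adjoint F) u)⟫ - ⟪Eginv d, G ((adjoint F) ubar)⟫ :=
        inner_sub_right _ _ _
      have hcross2 := cross_expand' Eginv hEginvsym σ (G ((adjoint F) u)) (G ((adjoint F) ubar))
          βv d hkey
      have z1' : σ/2 * (⟪vbar - vbar, Tg (vbar - vbar)⟫ : ℝ) = 0 := by rw [z1]; ring
      have z2' : σ/2 * (⟪ubar - ubar, Tfhat (ubar - ubar)⟫ : ℝ) = 0 := by rw [z2]; ring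
      have t1' : σ/2 * (⟪u - ubar, Tfhat (u - ubar)⟫ : ℝ)
          = σ/2 * (⟪u - ubar, Tf (u - ubar)⟫
            + ⟪G ((adjoint F) (u - ubar)), Eginv (G ((adjoint F) (u - ubar)))⟫) := by rw [t1]
      have t2' : σ/2 * (⟪vbar - w u, Eg (vbar - w u)⟫ : ℝ)
          = σ/2 * ⟪Eginv (G ((adjoint F) u) + βv), G ((adjoint F) u) + βv⟫ := by rw [t2]
      have t3' : σ/2 * (⟪vbar - w ubar, Eg (vbar - w ubar)⟫ : ℝ)
          = σ/2 * ⟪Eginv (G ((adjoint F) ubar) + βv), G ((adjoint F) ubar) + βv⟫ := by rw [t3]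
      have e5' : σ/2 * (⟪G ((adjoint F) (u - ubar)), Eginv (G ((adjoint F) (u - ubar)))⟫ : ℝ)
          = σ/2 * ⟪G ((adjoint F) u) - G ((adjoint F) ubar),
              Eginv (G ((adjoint F) u) - G ((adjoint F) ubar))⟫ := by rw [e5]
      linarith [e1, e2, z1', z2', t1', t2', t3', d1, d2, e5', e6, hcross2]
    intro u
    by_cases hfu : f u = ⊤
    · rw [hfu, EReal.top_add_coe]
      exact le_top
    · obtain ⟨s, hs⟩ : ∃ s : ℝ, f u = (s : EReal) := by
        lift f u to ℝ using ⟨hfu, hproper.2 u⟩ with s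
        exact ⟨s, rfl⟩
      rw [hp, hs, ← EReal.coe_add, ← EReal.coe_add, EReal.coe_le_coe_iff]
      have h2 := hjoint u (w u)
      rw [hp, hs, ← EReal.coe_add, ← EReal.coe_add, EReal.coe_le_coe_iff] at h2
      have h3 := hE1 up vp
      have h4 := hE2 u
      have h5 := hE2 up
      have h6 : 0 ≤ (σ/2) * ⟪vp - w up, Eg (vp - w up)⟫ :=
        mul_nonneg (by linarith) (hEgpsd _)
      linarith
  · exact hb.trans (by rw [hw])
end
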